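/- The minimal ε-order from the initial state to the goal state is the same under the original and the modified transition structure: d(s,g) = d̄(s,g). -/

import Mathlib

open Asymptotics Filter Set
open scoped Topology Classical

namespace PathZVA

variable {X : Type*}

/-- The probability of a path (a finite list of states): the product of its
transition probabilities. -/
def pathProb (p : X → X → ℝ) (l : List X) : ℝ :=
  ((l.zip l.tail).map fun q => p q.1 q.2).prod

/-- The ε-order of a path: the sum of the ε-orders of its transitions. -/
def pathOrder (r : X → X → ℕ) (l : List X) : ℕ :=
  ((l.zip l.tail).map fun q => r q.1 q.2).sum

/-- A path is valid if all of its transitions have not-identically-zero probability. -/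
def ValidPath (p : X → X → ℝ → ℝ) (l : List X) : Prop :=
  ∀ q ∈ l.zip l.tail, ∃ ε ∈ Set.Ioo (0:ℝ) 1, p q.1 q.2 ε ≠ 0

/-- Paths from `x` to `z` whose states strictly before the last one avoid `{t, g}`. -/
def PathsTo (g t x z : X) : Set (List X) :=
  {l | l.head? = some x ∧ l.getLast? = some z ∧ ∀ y ∈ l.dropLast, y ≠ t ∧ y ≠ g}

/-- Successful paths from `x`: they reach `g`, avoiding `{t, g}` before the end. -/
def Phi (g t x : X) : Set (List X) := PathsTo g t x g

/-- Minimal ε-order over valid paths from `x` to `z` (`∞` if there is none). -/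
noncomputable def minOrder (p : X → X → ℝ → ℝ) (r : X → X → ℕ) (g t x z : X) : ℕ∞ :=
  sInf ((fun l => (pathOrder r l : ℕ∞)) '' {l | l ∈ PathsTo g t x z ∧ ValidPath p l})

/-- `ε ^ n` for an extended natural number `n`, with `ε ^ ∞ = 0`. -/
noncomputable def epow (ε : ℝ) (n : ℕ∞) : ℝ := if n = ⊤ then 0 else ε ^ n.toNat

/-- `ε ^ (k * n)` (a real-exponent power) for an extended natural `n`; `0` for `n = ∞`. -/
noncomputable def repow (ε k : ℝ) (n : ℕ∞) : ℝ :=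
  if n = ⊤ then 0 else ε ^ (k * (n.toNat : ℝ))

/-- A family `v x` is `Θ(w x)` as `ε ↓ 0`, uniformly in `x`. -/
def UnifTheta (v w : X → ℝ → ℝ) : Prop :=
  ∃ a b : ℝ, 0 < a ∧ 0 < b ∧ ∀ x, ∀ᶠ ε in 𝓝[>] (0:ℝ),
    a * w x ε ≤ v x ε ∧ v x ε ≤ b * w x ε

/-- A highly reliable Markovian system: a DTMC whose transition probabilities are
parameterised by powers of a rarity parameter `ε`. -/
structure HRMS (X : Type*) where
  /-- transition probabilities, as functions of ε -/
  p : X → X → ℝ → ℝ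
  /-- ε-orders of the transitions -/
  r : X → X → ℕ
  /-- initial state -/
  s : X
  /-- goal state -/
  g : X
  /-- taboo/regeneration state -/
  t : X
  nonneg : ∀ x z, ∀ ε ∈ Set.Ioo (0:ℝ) 1, 0 ≤ p x z ε
  rowSum : ∀ x, ∀ ε ∈ Set.Ioo (0:ℝ) 1, HasSum (fun z => p x z ε) 1
  g_abs : ∀ ε ∈ Set.Ioo (0:ℝ) 1, p g g ε = 1
  t_abs : ∀ ε ∈ Set.Ioo (0:ℝ) 1, p t t ε = 1
  s_ne_g : s ≠ g
  s_ne_t : s ≠ t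
  order : ∀ x z, (∀ ε ∈ Set.Ioo (0:ℝ) 1, p x z ε = 0) ∨
    (fun ε => p x z ε) =Θ[𝓝[>] (0:ℝ)] fun ε => ε ^ r x z

namespace HRMS

variable (C : HRMS X)

/-- `d(x, z)`: the minimal ε-order over paths from `x` to `z`. -/
noncomputable def d (x z : X) : ℕ∞ := minOrder C.p C.r C.g C.t x z

/-- `Λ`: the states that are asymptotically at most as hard to reach from `s` as `g`. -/
def Lam : Set X := {x | C.d C.s x ≤ C.d C.s C.g}

/-- `Γ`: the states bordering `Λ`. -/
def Gam : Set X :=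
  {x | x ∉ C.Lam ∧ ∃ z ∈ C.Lam, ∃ ε ∈ Set.Ioo (0:ℝ) 1, C.p z x ε ≠ 0}

/-- The chain has no high-probability cycles. -/
def NoHPC : Prop :=
  ¬ ∃ l : List X, 2 ≤ l.length ∧ l.head? = l.getLast? ∧ ValidPath C.p l ∧
      (fun ε => pathProb (fun a b => C.p a b ε) l) =Θ[𝓝[>] (0:ℝ)] fun _ => (1:ℝ)

/-- The modified transition probabilities `p̄`, with shortcuts from `Γ` to `g`. -/
noncomputable def pbar (x z : X) (ε : ℝ) : ℝ :=
  if x ∈ C.Gam then (if z = C.g then 1 else 0) else C.p x z ε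

/-- The ε-orders of the transitions of `p̄`. -/
noncomputable def rbar (x z : X) : ℕ := if x ∈ C.Gam then 0 else C.r x z

/-- `d̄(x, z)`: the minimal ε-order over paths from `x` to `z` under `p̄`. -/
noncomputable def dbar (x z : X) : ℕ∞ := minOrder (fun a b ε => C.pbar a b ε) C.rbar C.g C.t x z

/-- `Δ(x)`: the dominant paths from `x` to `g`, i.e. those `ω ∈ Φ(x)` with
`P̄(ω) = Θ(ε^{d̄(x,g)})`. -/
def Delta (x : X) : Set (List X) :=
  {l | l ∈ Phi C.g C.t x ∧
    (fun ε => pathProb (fun a b => C.pbar a b ε) l) =Θ[𝓝[>] (0:ℝ)]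
      fun ε => epow ε (C.dbar x C.g)}

/-- `v^Δ(x)`: the total `P̄`-probability of the dominant paths from `x`. -/
noncomputable def vDelta (x : X) (ε : ℝ) : ℝ :=
  ∑' l : ↥(C.Delta x), pathProb (fun a b => C.pbar a b ε) (l : List X)

/-- The normalising denominator of the zero-variance-approximation measure. -/
noncomputable def qden (v : X → ℝ → ℝ) (x : X) (ε : ℝ) : ℝ :=
  ∑' z : X, C.pbar x z ε * v z ε

/-- The probability of a path under the importance-sampling measure `Q`:
zero-variance approximation based on `v` while the path stays in `Λ ∖ {g}`,
and the original measure `p` from the moment the path leaves `Λ` or hits `g`. -/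
noncomputable def Qprob (v : X → ℝ → ℝ) (ε : ℝ) : List X → ℝ
  | [] => 1
  | [_] => 1
  | x :: y :: l =>
    if x ∈ C.Lam ∧ x ≠ C.g then
      C.pbar x y ε * v y ε / C.qden v x ε * Qprob v ε (y :: l)
    else
      pathProb (fun a b => C.p a b ε) (x :: y :: l)

/-- `E_Q(L_Q^k · 1_S)`: the `k`-th moment of the likelihood ratio restricted to a
set `S` of paths. -/
noncomputable def EQkOn (S : Set (List X)) (v : X → ℝ → ℝ) (k ε : ℝ) : ℝ :=
  ∑' ω : ↥S, C.Qprob v ε (ω : List X) *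
    (pathProb (fun a b => C.p a b ε) (ω : List X) / C.Qprob v ε (ω : List X)) ^ k

/-- `E_Q(L_Q^k · 1_Φ)`. -/
noncomputable def EQk (v : X → ℝ → ℝ) (k ε : ℝ) : ℝ :=
  C.EQkOn (Phi C.g C.t C.s) v k ε

/-- `Var_Q(L_Q · 1_Φ) = E_Q(L_Q² · 1_Φ) − (E_Q(L_Q · 1_Φ))²`. -/
noncomputable def varQ (v : X → ℝ → ℝ) (ε : ℝ) : ℝ :=
  C.EQk v 2 ε - (C.EQk v 1 ε) ^ 2

end HRMS

end PathZVA

namespace PathZVA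

lemma mem_zip_tail_fst {X : Type*} : ∀ (l : List X) (q : X × X), q ∈ l.zip l.tail → q.1 ∈ l.dropLast
  | [], q, h => by simp at h
  | [a], q, h => by simp at h
  | a :: b :: rest, q, h => by
    rw [List.tail_cons, List.zip_cons_cons, List.mem_cons] at h
    rcases h with rfl | h
    · simp
    · rw [List.dropLast_cons₂, List.mem_cons]
      exact Or.inr (mem_zip_tail_fst (b :: rest) q h)

lemma zip_tail_middle {X : Type*} : ∀ (l₁ : List X) (y : X) (l₂ : List X),
    (l₁ ++ y :: l₂).zip (l₁ ++ y :: l₂).tail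
      = ((l₁ ++ [y]).zip (l₁ ++ [y]).tail) ++ ((y :: l₂).zip l₂)
  | [], y, l₂ => by simp
  | [a], y, l₂ => by simp
  | a :: b :: l₁, y, l₂ => by
    have ih := zip_tail_middle (b :: l₁) y l₂
    simp only [List.cons_append, List.tail_cons, List.zip_cons_cons] at ih ⊢
    rw [ih]

end PathZVA


open PathZVA HRMS in
/-- Lemma 2: the minimal ε-order from the initial state `s` to the goal state `g`
is the same under the original and the modified transition structure:
`d(s,g) = d̄(s,g)`. -/
theorem d_eq_dbar {X : Type*} [Countable X] (C : HRMS X)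
    (hΛfin : C.Lam.Finite) (hΓfin : C.Gam.Finite) :
    C.d C.s C.g = C.dbar C.s C.g := by
  classical
  apply le_antisymm
  · -- d ≤ dbar
    rw [HRMS.dbar, minOrder]
    apply le_sInf
    rintro a ⟨l, ⟨hpath, hvalid⟩, rfl⟩
    obtain ⟨hhead, hlast, hdrop⟩ := hpath
    by_cases hΓ : ∃ y ∈ l.dropLast, y ∈ C.Gam
    · obtain ⟨w, hwdl, hwΓ⟩ := hΓ
      set P : X → Bool := fun x => decide (x ∉ C.Gam) with hP
      set l₁ := l.takeWhile P with hl₁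
      have h₁ : ∀ z ∈ l₁, z ∉ C.Gam := by
        intro z hz
        rw [hl₁] at hz
        have := List.mem_takeWhile_imp (p := P) hz
        simpa [hP] using this
      have hrestne : l.dropWhile P ≠ [] := by
        intro h
        have hwl : w ∈ l := List.dropLast_subset l hwdl
        rw [← List.takeWhile_append_dropWhile (p := P) (l := l), h, List.append_nil] at hwl
        exact h₁ w hwl hwΓ
      obtain ⟨y, l₂, hrest⟩ := List.exists_cons_of_ne_nil hrestne
      have hyΓ : y ∈ C.Gam := by
        have h' : ∀ (m : List X) (hm : m ≠ []), m = y :: l₂ → P (m.head hm) = false → y ∈ C.Gam := by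
          rintro m hm rfl hfalse
          simpa [hP] using hfalse
        exact h' _ hrestne hrest (List.head_dropWhile_not P hrestne)
      have hl : l = l₁ ++ y :: l₂ := by
        rw [hl₁, ← hrest, List.takeWhile_append_dropWhile]
      have hprefix_sub : ∀ z ∈ l₁, z ∈ l.dropLast := by
        intro z hz
        rw [hl, List.dropLast_append_of_ne_nil (l' := l₁) (List.cons_ne_nil y l₂)]
        exact List.mem_append_left _ hz
      have hyd : y ∈ l.dropLast := by
        cases l₂ with
        | nil =>
          have hwl : w ∈ l₁ ++ [y] := hl ▸ List.dropLast_subset l hwdl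
          rcases List.mem_append.1 hwl with h | h
          · exact absurd hwΓ (h₁ w h)
          · rw [List.mem_singleton] at h; exact h ▸ hwdl
        | cons b l₂' =>
          rw [hl, List.dropLast_append_of_ne_nil (l' := l₁) (List.cons_ne_nil y (b :: l₂')),
            List.dropLast_cons₂]
          exact List.mem_append_right _ (List.mem_cons_self (a := y))
      have hT : l.zip l.tail
          = ((l₁ ++ [y]).zip (l₁ ++ [y]).tail) ++ ((y :: l₂).zip l₂) := by
        conv_lhs => rw [hl]
        exact zip_tail_middle l₁ y l₂
      have hT1src : ∀ q ∈ (l₁ ++ [y]).zip (l₁ ++ [y]).tail, q.1 ∈ l₁ := by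
        intro q hq
        have := mem_zip_tail_fst _ q hq
        rwa [List.dropLast_concat] at this
      -- prefix path m := l₁ ++ [y]
      set m := l₁ ++ [y] with hm
      have hm_path : m ∈ PathsTo C.g C.t C.s y := by
        refine ⟨?_, List.getLast?_concat, ?_⟩
        · rw [hl, List.head?_append] at hhead
          rw [hm, List.head?_append]
          simpa using hhead
        · intro z hz
          rw [hm, List.dropLast_concat] at hz
          exact hdrop z (hprefix_sub z hz)
      have hm_valid : ValidPath C.p m := by
        intro q hq
        have hqL : q ∈ l.zip l.tail := by
          rw [hT]; exact List.mem_append_left _ hq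
        obtain ⟨ε, hε, hne⟩ := hvalid q hqL
        refine ⟨ε, hε, ?_⟩
        have : q.1 ∉ C.Gam := h₁ q.1 (hT1src q hq)
        simpa [HRMS.pbar, this] using hne
      have hdy : C.d C.s y ≤ (pathOrder C.r m : ℕ∞) := by
        rw [HRMS.d, minOrder]
        exact sInf_le ⟨m, ⟨hm_path, hm_valid⟩, rfl⟩
      have horder_eq : pathOrder C.r m = pathOrder C.rbar m := by
        unfold pathOrder
        congr 1
        refine List.map_congr_left fun q hq => ?_
        simp [HRMS.rbar, h₁ q.1 (hT1src q hq)]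
      have horder_le : pathOrder C.rbar m ≤ pathOrder C.rbar l := by
        unfold pathOrder
        rw [hT, List.map_append, List.sum_append]
        exact Nat.le_add_right _ _
      have hlt : C.d C.s C.g < C.d C.s y := by
        have : y ∉ C.Lam := hyΓ.1
        exact lt_of_not_ge this
      calc C.d C.s C.g ≤ C.d C.s y := le_of_lt hlt
        _ ≤ (pathOrder C.r m : ℕ∞) := hdy
        _ = (pathOrder C.rbar m : ℕ∞) := by rw [horder_eq]
        _ ≤ (pathOrder C.rbar l : ℕ∞) := Nat.cast_le.mpr horder_le
    · push_neg at hΓ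
      have hsrc : ∀ q ∈ l.zip l.tail, q.1 ∉ C.Gam :=
        fun q hq => hΓ _ (mem_zip_tail_fst l q hq)
      have hval' : ValidPath C.p l := by
        intro q hq
        obtain ⟨ε, hε, hne⟩ := hvalid q hq
        refine ⟨ε, hε, ?_⟩
        simpa [HRMS.pbar, hsrc q hq] using hne
      have horder : pathOrder C.r l = pathOrder C.rbar l := by
        unfold pathOrder
        congr 1
        exact List.map_congr_left fun q hq => by simp [HRMS.rbar, hsrc q hq]
      rw [HRMS.d, minOrder]
      exact sInf_le ⟨l, ⟨⟨hhead, hlast, hdrop⟩, hval'⟩, by dsimp only; rw [horder]⟩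
  · -- dbar ≤ d
    rw [HRMS.d, minOrder]
    apply le_sInf
    rintro a ⟨l, ⟨hpath, hvalid⟩, rfl⟩
    obtain ⟨hhead, hlast, hdrop⟩ := hpath
    by_cases hΓ : ∃ y ∈ l.dropLast, y ∈ C.Gam
    · obtain ⟨w, hwdl, hwΓ⟩ := hΓ
      set P : X → Bool := fun x => decide (x ∉ C.Gam) with hP
      set l₁ := l.takeWhile P with hl₁
      have h₁ : ∀ z ∈ l₁, z ∉ C.Gam := by
        intro z hz
        rw [hl₁] at hz
        have := List.mem_takeWhile_imp (p := P) hz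
        simpa [hP] using this
      have hrestne : l.dropWhile P ≠ [] := by
        intro h
        have hwl : w ∈ l := List.dropLast_subset l hwdl
        rw [← List.takeWhile_append_dropWhile (p := P) (l := l), h, List.append_nil] at hwl
        exact h₁ w hwl hwΓ
      obtain ⟨y, l₂, hrest⟩ := List.exists_cons_of_ne_nil hrestne
      have hyΓ : y ∈ C.Gam := by
        have h' : ∀ (m : List X) (hm : m ≠ []), m = y :: l₂ → P (m.head hm) = false → y ∈ C.Gam := by
          rintro m hm rfl hfalse
          simpa [hP] using hfalse
        exact h' _ hrestne hrest (List.head_dropWhile_not P hrestne)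
      have hl : l = l₁ ++ y :: l₂ := by
        rw [hl₁, ← hrest, List.takeWhile_append_dropWhile]
      have hprefix_sub : ∀ z ∈ l₁, z ∈ l.dropLast := by
        intro z hz
        rw [hl, List.dropLast_append_of_ne_nil (l' := l₁) (List.cons_ne_nil y l₂)]
        exact List.mem_append_left _ hz
      have hyd : y ∈ l.dropLast := by
        cases l₂ with
        | nil =>
          have hwl : w ∈ l₁ ++ [y] := hl ▸ List.dropLast_subset l hwdl
          rcases List.mem_append.1 hwl with h | h
          · exact absurd hwΓ (h₁ w h)
          · rw [List.mem_singleton] at h; exact h ▸ hwdl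
        | cons b l₂' =>
          rw [hl, List.dropLast_append_of_ne_nil (l' := l₁) (List.cons_ne_nil y (b :: l₂')),
            List.dropLast_cons₂]
          exact List.mem_append_right _ (List.mem_cons_self (a := y))
      have hT : l.zip l.tail
          = ((l₁ ++ [y]).zip (l₁ ++ [y]).tail) ++ ((y :: l₂).zip l₂) := by
        conv_lhs => rw [hl]
        exact zip_tail_middle l₁ y l₂
      have hT1src : ∀ q ∈ (l₁ ++ [y]).zip (l₁ ++ [y]).tail, q.1 ∈ l₁ := by
        intro q hq
        have := mem_zip_tail_fst _ q hq
        rwa [List.dropLast_concat] at this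
      -- shortcut path m := l₁ ++ y :: [C.g]
      set m := l₁ ++ y :: [C.g] with hm
      have hmT : m.zip m.tail
          = ((l₁ ++ [y]).zip (l₁ ++ [y]).tail) ++ [(y, C.g)] := by
        rw [hm, zip_tail_middle l₁ y [C.g]]
        simp
      have hm_path : m ∈ PathsTo C.g C.t C.s C.g := by
        refine ⟨?_, ?_, ?_⟩
        · rw [hl, List.head?_append] at hhead
          rw [hm, List.head?_append]
          simpa using hhead
        · show m.getLast? = some C.g
          rw [hm]
          rw [show l₁ ++ y :: [C.g] = (l₁ ++ [y]) ++ [C.g] by simp]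
          exact List.getLast?_concat
        · intro z hz
          rw [hm, show l₁ ++ y :: [C.g] = (l₁ ++ [y]) ++ [C.g] by simp,
            List.dropLast_concat] at hz
          rcases List.mem_append.1 hz with h | h
          · exact hdrop z (hprefix_sub z h)
          · rw [List.mem_singleton] at h
            exact hdrop z (h ▸ hyd)
      have hm_valid : ValidPath (fun a b ε => C.pbar a b ε) m := by
        intro q hq
        rw [hmT, List.mem_append] at hq
        rcases hq with hq | hq
        · have hqL : q ∈ l.zip l.tail := by
            rw [hT]; exact List.mem_append_left _ hq
          obtain ⟨ε, hε, hne⟩ := hvalid q hqL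
          refine ⟨ε, hε, ?_⟩
          have : q.1 ∉ C.Gam := h₁ q.1 (hT1src q hq)
          simpa [HRMS.pbar, this] using hne
        · rw [List.mem_singleton] at hq
          refine ⟨1/2, by norm_num, ?_⟩
          rw [hq]
          simp [HRMS.pbar, hyΓ]
      have hd : C.dbar C.s C.g ≤ (pathOrder C.rbar m : ℕ∞) := by
        rw [HRMS.dbar, minOrder]
        exact sInf_le ⟨m, ⟨hm_path, hm_valid⟩, rfl⟩
      have horder : pathOrder C.rbar m ≤ pathOrder C.r l := by
        unfold pathOrder
        rw [hmT, hT, List.map_append, List.sum_append, List.map_append, List.sum_append]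
        have h1 : (((l₁ ++ [y]).zip (l₁ ++ [y]).tail).map fun q => C.rbar q.1 q.2)
            = ((l₁ ++ [y]).zip (l₁ ++ [y]).tail).map fun q => C.r q.1 q.2 :=
          List.map_congr_left fun q hq => by simp [HRMS.rbar, h₁ q.1 (hT1src q hq)]
        have h2 : ([(y, C.g)].map fun q => C.rbar q.1 q.2).sum = 0 := by
          simp [HRMS.rbar, hyΓ]
        rw [h1, h2]
        exact Nat.le_add_right _ _
      exact le_trans hd (Nat.cast_le.mpr horder)
    · push_neg at hΓ
      have hsrc : ∀ q ∈ l.zip l.tail, q.1 ∉ C.Gam :=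
        fun q hq => hΓ _ (mem_zip_tail_fst l q hq)
      have hval' : ValidPath (fun a b ε => C.pbar a b ε) l := by
        intro q hq
        obtain ⟨ε, hε, hne⟩ := hvalid q hq
        refine ⟨ε, hε, ?_⟩
        simpa [HRMS.pbar, hsrc q hq] using hne
      have horder : pathOrder C.rbar l = pathOrder C.r l := by
        unfold pathOrder
        congr 1
        exact List.map_congr_left fun q hq => by simp [HRMS.rbar, hsrc q hq]
      rw [HRMS.dbar, minOrder]
      exact sInf_le ⟨l, ⟨⟨hhead, hlast, hdrop⟩, hval'⟩, by dsimp only; rw [horder]⟩
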